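/- The translation subgroup T = G₆ ∩ (ℝ³ × {I}) of G₆ equals the subgroup of G₆ generated by x², y² and z²; it is free abelian of rank 3 (with basis {x², y², z²}), and the quotient G₆/T is isomorphic to (ℤ/2ℤ)². -/

import Mathlib

/-! `Aff(3) = ℝ³ ⋊ GL(3,ℝ)`, realized as the group of affine self-equivalences of `ℝ³`
(with multiplication given by composition, so that `(v,A)(w,B) = (v + Aw, AB)`). -/

abbrev V3 : Type := Fin 3 → ℝ
abbrev Aff3 : Type := V3 ≃ᵃ[ℝ] V3

/-- The linear self-equivalence of `ℝ³` given by a diagonal matrix with entries `±1`. -/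
noncomputable def diagLin (d : Fin 3 → ℝ) (hd : ∀ i, d i * d i = 1) : V3 ≃ₗ[ℝ] V3 where
  toFun v := fun i => d i * v i
  invFun v := fun i => d i * v i
  map_add' u v := by funext i; simp [mul_add]
  map_smul' c v := by funext i; simp [smul_eq_mul]; ring
  left_inv v := by funext i; simp [← mul_assoc, hd i]
  right_inv v := by funext i; simp [← mul_assoc, hd i]

lemma sq_one_X : ∀ i, (![(1:ℝ),-1,-1]) i * (![(1:ℝ),-1,-1]) i = 1 := by
  intro i; fin_cases i <;> norm_num

lemma sq_one_Y : ∀ i, (![(-1:ℝ),1,-1]) i * (![(-1:ℝ),1,-1]) i = 1 := by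
  intro i; fin_cases i <;> norm_num

/-- The affine transformation `x = (½e₁, X)`, acting by `w ↦ Xw + ½e₁`,
where `X = diag[1,−1,−1]`. -/
noncomputable def affx : Aff3 :=
  ((diagLin ![1,-1,-1] sq_one_X).toAffineEquiv).trans
    (AffineEquiv.constVAdd ℝ V3 ![1/2, 0, 0])

/-- The affine transformation `y = (½(e₂−e₃), Y)`, acting by `w ↦ Yw + ½(e₂−e₃)`,
where `Y = diag[−1,1,−1]`. -/
noncomputable def affy : Aff3 :=
  ((diagLin ![-1,1,-1] sq_one_Y).toAffineEquiv).trans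
    (AffineEquiv.constVAdd ℝ V3 ![0, 1/2, -1/2])

/-- `z = xy = (½(e₁−e₂+e₃), Z)`. -/
noncomputable def affz : Aff3 := affx * affy

/-- The Hantzsche–Wendt group `G₆`, the subgroup of `Aff(3)` generated by `x` and `y`. -/
noncomputable def G6 : Subgroup Aff3 := Subgroup.closure {affx, affy}

/-- The translation subgroup `T = G₆ ∩ (ℝ³ × {I})`: the elements of `G₆`
whose linear part is the identity. -/
noncomputable def TT : Subgroup Aff3 :=
  G6 ⊓ (AffineEquiv.linearHom : Aff3 →* (V3 ≃ₗ[ℝ] V3)).ker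

lemma affx_mem : affx ∈ G6 := Subgroup.subset_closure (by simp)
lemma affy_mem : affy ∈ G6 := Subgroup.subset_closure (by simp)

/-- `x` as an element of `G₆`. -/
noncomputable def xg : G6 := ⟨affx, affx_mem⟩
/-- `y` as an element of `G₆`. -/
noncomputable def yg : G6 := ⟨affy, affy_mem⟩
/-- `z = xy` as an element of `G₆`. -/
noncomputable def zg : G6 := xg * yg


noncomputable def tr (v : V3) : Aff3 := AffineEquiv.constVAdd ℝ V3 v

lemma tr_apply (v p : V3) : tr v p = v + p := rfl

lemma tr_mul (u v : V3) : tr u * tr v = tr (u + v) := by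
  rw [tr, tr, tr, AffineEquiv.constVAdd_add, AffineEquiv.mul_def]

lemma tr_inv (v : V3) : (tr v)⁻¹ = tr (-v) := by
  rw [tr, tr, AffineEquiv.inv_def, AffineEquiv.constVAdd_symm]

lemma tr_zpow (n : ℤ) (v : V3) : (tr v) ^ n = tr (n • v) :=
  (AffineEquiv.constVAdd_zsmul ℝ V3 n v).symm

lemma affx_apply (p : V3) : affx p = ![p 0 + 1/2, -(p 1), -(p 2)] := by
  funext i
  fin_cases i <;>
    simp [affx, diagLin, AffineEquiv.trans_apply, Matrix.cons_val_zero, Matrix.cons_val_one] <;>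
    ring

lemma affy_apply (p : V3) : affy p = ![-(p 0), p 1 + 1/2, -(p 2) - 1/2] := by
  funext i
  fin_cases i <;>
    simp [affy, diagLin, AffineEquiv.trans_apply] <;> ring

lemma affz_apply (p : V3) : affz p = ![-(p 0) + 1/2, -(p 1) - 1/2, p 2 + 1/2] := by
  funext i
  rw [affz, AffineEquiv.mul_def, AffineEquiv.trans_apply, affy_apply, affx_apply]
  fin_cases i <;> simp <;> ring

lemma hx2 : affx ^ 2 = tr ![1, 0, 0] := by
  refine AffineEquiv.ext fun p => ?_
  rw [pow_two, AffineEquiv.mul_def, AffineEquiv.trans_apply, affx_apply, affx_apply, tr_apply]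
  funext i
  fin_cases i <;> simp <;> ring

lemma hy2 : affy ^ 2 = tr ![0, 1, 0] := by
  refine AffineEquiv.ext fun p => ?_
  rw [pow_two, AffineEquiv.mul_def, AffineEquiv.trans_apply, affy_apply, affy_apply, tr_apply]
  funext i
  fin_cases i <;> simp <;> ring

lemma hz2 : affz ^ 2 = tr ![0, 0, 1] := by
  refine AffineEquiv.ext fun p => ?_
  rw [pow_two, AffineEquiv.mul_def, AffineEquiv.trans_apply, affz_apply, affz_apply, tr_apply]
  funext i
  fin_cases i <;> simp <;> ring

lemma p_yx : affy * affx = tr ![-1, 1, -1] * affz := by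
  refine AffineEquiv.ext fun p => ?_
  rw [AffineEquiv.mul_def, AffineEquiv.trans_apply, AffineEquiv.mul_def, AffineEquiv.trans_apply,
    affx_apply, affy_apply, affz_apply, tr_apply]
  funext i
  fin_cases i <;> simp <;> ring

lemma p_xz : affx * affz = tr ![1, 0, 0] * affy := by
  refine AffineEquiv.ext fun p => ?_
  rw [AffineEquiv.mul_def, AffineEquiv.trans_apply, AffineEquiv.mul_def, AffineEquiv.trans_apply,
    affz_apply, affx_apply, affy_apply, tr_apply]
  funext i
  fin_cases i <;> simp <;> ring

lemma p_zx : affz * affx = tr ![0, -1, 1] * affy := by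
  refine AffineEquiv.ext fun p => ?_
  rw [AffineEquiv.mul_def, AffineEquiv.trans_apply, AffineEquiv.mul_def, AffineEquiv.trans_apply,
    affx_apply, affz_apply, affy_apply, tr_apply]
  funext i
  fin_cases i <;> simp <;> ring

lemma p_yz : affy * affz = tr ![-1, 0, -1] * affx := by
  refine AffineEquiv.ext fun p => ?_
  rw [AffineEquiv.mul_def, AffineEquiv.trans_apply, AffineEquiv.mul_def, AffineEquiv.trans_apply,
    affz_apply, affy_apply, affx_apply, tr_apply]
  funext i
  fin_cases i <;> simp <;> ring

lemma p_zy : affz * affy = tr ![0, -1, 0] * affx := by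
  refine AffineEquiv.ext fun p => ?_
  rw [AffineEquiv.mul_def, AffineEquiv.trans_apply, AffineEquiv.mul_def, AffineEquiv.trans_apply,
    affy_apply, affz_apply, affx_apply, tr_apply]
  funext i
  fin_cases i <;> simp <;> ring

lemma lin_apply (a : Aff3) (v : V3) : a.linear v = a v - a 0 := by
  have h := a.map_vadd 0 v
  rw [vadd_eq_add, vadd_eq_add, add_zero] at h
  rw [h]; abel

lemma lin_affx (v : V3) : affx.linear v = ![v 0, -(v 1), -(v 2)] := by
  rw [lin_apply, affx_apply, affx_apply]
  funext i; fin_cases i <;> simp <;> ring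

lemma lin_affy (v : V3) : affy.linear v = ![-(v 0), v 1, -(v 2)] := by
  rw [lin_apply, affy_apply, affy_apply]
  funext i; fin_cases i <;> simp <;> ring

lemma lin_affz (v : V3) : affz.linear v = ![-(v 0), -(v 1), v 2] := by
  rw [lin_apply, affz_apply, affz_apply]
  funext i; fin_cases i <;> simp <;> ring

lemma conj_tr (a : Aff3) (v : V3) : a * tr v * a⁻¹ = tr (a.linear v) := by
  refine AffineEquiv.ext fun p => ?_
  show a (tr v (a⁻¹ p)) = _
  rw [tr_apply, tr_apply, ← vadd_eq_add (a := v), AffineEquiv.map_vadd, AffineEquiv.inv_def,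
    AffineEquiv.apply_symm_apply, vadd_eq_add]

/-- The subgroup generated by the squares. -/
noncomputable def N : Subgroup Aff3 := Subgroup.closure {affx ^ 2, affy ^ 2, affz ^ 2}

lemma x2_mem_N : affx ^ 2 ∈ N := Subgroup.subset_closure (by simp)
lemma y2_mem_N : affy ^ 2 ∈ N := Subgroup.subset_closure (by simp)
lemma z2_mem_N : affz ^ 2 ∈ N := Subgroup.subset_closure (by simp)

lemma trMem (a b c : ℤ) : tr ![(a:ℝ), (b:ℝ), (c:ℝ)] ∈ N := by
  have h : (![(a:ℝ), (b:ℝ), (c:ℝ)] : V3)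
      = (a • ![(1:ℝ),0,0] + b • ![(0:ℝ),1,0]) + c • ![(0:ℝ),0,1] := by
    funext i; fin_cases i <;> simp
  rw [h, ← tr_mul, ← tr_mul, ← tr_zpow, ← tr_zpow, ← tr_zpow]
  exact mul_mem (mul_mem (zpow_mem (hx2 ▸ x2_mem_N) a) (zpow_mem (hy2 ▸ y2_mem_N) b))
    (zpow_mem (hz2 ▸ z2_mem_N) c)

lemma mem_N_of_eq {v w : V3} (h : tr w ∈ N) (e : v = w) : tr v ∈ N := e ▸ h

lemma conj_mem_of {a : Aff3}
    (h : ∀ s ∈ ({affx ^ 2, affy ^ 2, affz ^ 2} : Set Aff3), a * s * a⁻¹ ∈ N) :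
    ∀ t ∈ N, a * t * a⁻¹ ∈ N := by
  intro t ht
  have himg : (MulAut.conj a).toMonoidHom '' {affx ^ 2, affy ^ 2, affz ^ 2} ⊆ (N : Set Aff3) := by
    rintro _ ⟨s, hs, rfl⟩; simpa using h s hs
  have h2 : Subgroup.closure ((MulAut.conj a).toMonoidHom '' {affx ^ 2, affy ^ 2, affz ^ 2}) ≤ N :=
    (Subgroup.closure_le N).mpr himg
  have h3 := h2 (by rw [← MonoidHom.map_closure]; exact Subgroup.mem_map_of_mem _ ht)
  simpa using h3

/-- The four "coset representatives". -/
def S4 : Set Aff3 := {1, affx, affy, affz}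

lemma conj_mem : ∀ w ∈ S4, ∀ t ∈ N, w * t * w⁻¹ ∈ N := by
  rintro w hw
  rcases hw with rfl | rfl | rfl | rfl
  · intro t ht; simpa using ht
  · refine conj_mem_of ?_
    rintro s (rfl | rfl | rfl)
    · rw [hx2, conj_tr]
      exact mem_N_of_eq (by simpa using trMem 1 0 0)
        (by rw [lin_affx]; funext i; fin_cases i <;> norm_num [Matrix.cons_val_two])
    · rw [hy2, conj_tr]
      exact mem_N_of_eq (by simpa using trMem 0 (-1) 0)
        (by rw [lin_affx]; funext i; fin_cases i <;> norm_num [Matrix.cons_val_two])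
    · rw [hz2, conj_tr]
      exact mem_N_of_eq (by simpa using trMem 0 0 (-1))
        (by rw [lin_affx]; funext i; fin_cases i <;> norm_num [Matrix.cons_val_two])
  · refine conj_mem_of ?_
    rintro s (rfl | rfl | rfl)
    · rw [hx2, conj_tr]
      exact mem_N_of_eq (by simpa using trMem (-1) 0 0)
        (by rw [lin_affy]; funext i; fin_cases i <;> norm_num [Matrix.cons_val_two])
    · rw [hy2, conj_tr]
      exact mem_N_of_eq (by simpa using trMem 0 1 0)
        (by rw [lin_affy]; funext i; fin_cases i <;> norm_num [Matrix.cons_val_two])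
    · rw [hz2, conj_tr]
      exact mem_N_of_eq (by simpa using trMem 0 0 (-1))
        (by rw [lin_affy]; funext i; fin_cases i <;> norm_num [Matrix.cons_val_two])
  · refine conj_mem_of ?_
    rintro s (rfl | rfl | rfl)
    · rw [hx2, conj_tr]
      exact mem_N_of_eq (by simpa using trMem (-1) 0 0)
        (by rw [lin_affz]; funext i; fin_cases i <;> norm_num [Matrix.cons_val_two])
    · rw [hy2, conj_tr]
      exact mem_N_of_eq (by simpa using trMem 0 (-1) 0)
        (by rw [lin_affz]; funext i; fin_cases i <;> norm_num [Matrix.cons_val_two])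
    · rw [hz2, conj_tr]
      exact mem_N_of_eq (by simpa using trMem 0 0 1)
        (by rw [lin_affz]; funext i; fin_cases i <;> norm_num [Matrix.cons_val_two])

lemma invx : affx⁻¹ = tr ![-1, 0, 0] * affx := by
  have h : affx⁻¹ = (affx ^ 2)⁻¹ * affx := by group
  rw [h, hx2, tr_inv]
  congr 1; congr 1; funext i; fin_cases i <;> norm_num

lemma invy : affy⁻¹ = tr ![0, -1, 0] * affy := by
  have h : affy⁻¹ = (affy ^ 2)⁻¹ * affy := by group
  rw [h, hy2, tr_inv]
  congr 1; congr 1; funext i; fin_cases i <;> norm_num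

lemma invz : affz⁻¹ = tr ![0, 0, -1] * affz := by
  have h : affz⁻¹ = (affz ^ 2)⁻¹ * affz := by group
  rw [h, hz2, tr_inv]
  congr 1; congr 1; funext i; fin_cases i <;> norm_num

lemma one_mem_S4 : (1 : Aff3) ∈ S4 := by simp [S4]
lemma x_mem_S4 : affx ∈ S4 := by simp [S4]
lemma y_mem_S4 : affy ∈ S4 := by simp [S4]
lemma z_mem_S4 : affz ∈ S4 := by simp [S4]

lemma table : ∀ w ∈ S4, ∀ w' ∈ S4, ∃ t ∈ N, ∃ w'' ∈ S4, w * w' = t * w'' := by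
  rintro w hw w' hw'
  rcases hw with rfl | rfl | rfl | rfl
  · exact ⟨1, one_mem _, w', hw', rfl⟩
  all_goals rcases hw' with rfl | rfl | rfl | rfl
  · exact ⟨1, one_mem _, affx, x_mem_S4, by rw [mul_one, one_mul]⟩
  · exact ⟨affx ^ 2, x2_mem_N, 1, one_mem_S4, by rw [mul_one, pow_two]⟩
  · exact ⟨1, one_mem _, affz, z_mem_S4, by rw [one_mul]; rfl⟩
  · exact ⟨tr ![1, 0, 0], by simpa using trMem 1 0 0, affy, y_mem_S4, p_xz⟩
  · exact ⟨1, one_mem _, affy, y_mem_S4, by rw [mul_one, one_mul]⟩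
  · exact ⟨tr ![-1, 1, -1], by simpa using trMem (-1) 1 (-1), affz, z_mem_S4, p_yx⟩
  · exact ⟨affy ^ 2, y2_mem_N, 1, one_mem_S4, by rw [mul_one, pow_two]⟩
  · exact ⟨tr ![-1, 0, -1], by simpa using trMem (-1) 0 (-1), affx, x_mem_S4, p_yz⟩
  · exact ⟨1, one_mem _, affz, z_mem_S4, by rw [mul_one, one_mul]⟩
  · exact ⟨tr ![0, -1, 1], by simpa using trMem 0 (-1) 1, affy, y_mem_S4, p_zx⟩
  · exact ⟨tr ![0, -1, 0], by simpa using trMem 0 (-1) 0, affx, x_mem_S4, p_zy⟩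
  · exact ⟨affz ^ 2, z2_mem_N, 1, one_mem_S4, by rw [mul_one, pow_two]⟩

lemma invtable : ∀ w ∈ S4, ∃ t ∈ N, w⁻¹ = t * w := by
  rintro w (rfl | rfl | rfl | rfl)
  · exact ⟨1, one_mem _, by rw [inv_one, one_mul]⟩
  · exact ⟨tr ![-1, 0, 0], by simpa using trMem (-1) 0 0, invx⟩
  · exact ⟨tr ![0, -1, 0], by simpa using trMem 0 (-1) 0, invy⟩
  · exact ⟨tr ![0, 0, -1], by simpa using trMem 0 0 (-1), invz⟩

lemma decomp : ∀ g ∈ G6, ∃ t ∈ N, ∃ w ∈ S4, g = t * w := by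
  intro g hg
  refine Subgroup.closure_induction ?_ ?_ ?_ ?_ hg
  · rintro s (rfl | rfl)
    · exact ⟨1, one_mem _, affx, x_mem_S4, (one_mul _).symm⟩
    · exact ⟨1, one_mem _, affy, y_mem_S4, (one_mul _).symm⟩
  · exact ⟨1, one_mem _, 1, one_mem_S4, (one_mul _).symm⟩
  · rintro a b _ _ ⟨t, ht, w, hw, rfl⟩ ⟨t', ht', w', hw', rfl⟩
    obtain ⟨t'', ht'', w'', hw'', hww⟩ := table w hw w' hw'
    refine ⟨t * (w * t' * w⁻¹) * t'', mul_mem (mul_mem ht (conj_mem w hw t' ht')) ht'',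
      w'', hw'', ?_⟩
    rw [show t * (w * t' * w⁻¹) * t'' * w'' = t * (w * t' * w⁻¹) * (t'' * w'') by group, ← hww]
    group
  · rintro a _ ⟨t, ht, w, hw, rfl⟩
    obtain ⟨tw, htw, hwi⟩ := invtable w hw
    refine ⟨tw * (w * t⁻¹ * w⁻¹), mul_mem htw (conj_mem w hw t⁻¹ (inv_mem ht)), w, hw, ?_⟩
    conv_lhs => rw [mul_inv_rev, hwi]
    group

lemma lin_tr (v : V3) : AffineEquiv.linearHom (tr v) = 1 := rfl

lemma z2_mem_G6 : affz ^ 2 ∈ G6 := by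
  rw [pow_two, affz]
  exact mul_mem (mul_mem affx_mem affy_mem) (mul_mem affx_mem affy_mem)

lemma z2_eq : affx * affy * affx * affy = affz ^ 2 := by rw [pow_two, affz]; group

lemma N_le_TT : N ≤ TT := by
  refine (Subgroup.closure_le _).mpr ?_
  rintro s (rfl | rfl | rfl)
  · exact Subgroup.mem_inf.mpr ⟨pow_mem affx_mem 2,
      MonoidHom.mem_ker.mpr (by rw [hx2]; rfl)⟩
  · exact Subgroup.mem_inf.mpr ⟨pow_mem affy_mem 2,
      MonoidHom.mem_ker.mpr (by rw [hy2]; rfl)⟩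
  · exact Subgroup.mem_inf.mpr ⟨z2_mem_G6,
      MonoidHom.mem_ker.mpr (by rw [hz2]; rfl)⟩

lemma TT_eq_N : TT = N := by
  refine le_antisymm ?_ N_le_TT
  intro g hg
  obtain ⟨hG, hker0⟩ := Subgroup.mem_inf.mp hg
  obtain ⟨t, ht, w, hw, rfl⟩ := decomp g hG
  have htk : AffineEquiv.linearHom t = 1 :=
    (Subgroup.mem_inf.mp (N_le_TT ht)).2
  have hker : AffineEquiv.linearHom w = 1 := by
    have := MonoidHom.mem_ker.mp hker0
    rwa [map_mul, htk, one_mul] at this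
  rcases hw with rfl | rfl | rfl | rfl
  · simpa using ht
  · exfalso
    have h1 : affx.linear ![(0:ℝ),1,0] = ![(0:ℝ),1,0] := by
      rw [show affx.linear = (AffineEquiv.linearHom affx : V3 ≃ₗ[ℝ] V3) from rfl, hker]; rfl
    have := congrFun (h1.symm.trans (lin_affx ![0,1,0])) 1
    norm_num at this
  · exfalso
    have h1 : affy.linear ![(1:ℝ),0,0] = ![(1:ℝ),0,0] := by
      rw [show affy.linear = (AffineEquiv.linearHom affy : V3 ≃ₗ[ℝ] V3) from rfl, hker]; rfl
    have := congrFun (h1.symm.trans (lin_affy ![1,0,0])) 0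
    norm_num at this
  · exfalso
    have h1 : affz.linear ![(1:ℝ),0,0] = ![(1:ℝ),0,0] := by
      rw [show affz.linear = (AffineEquiv.linearHom affz : V3 ≃ₗ[ℝ] V3) from rfl, hker]; rfl
    have := congrFun (h1.symm.trans (lin_affz ![1,0,0])) 0
    norm_num at this

lemma lin_mem : ∀ g ∈ G6, ∃ d : Fin 3 → ℝ,
    (∀ i, d i = 1 ∨ d i = -1) ∧ d 0 * d 1 * d 2 = 1 ∧
    ∀ (v : V3) (i : Fin 3), g.linear v i = d i * v i := by
  intro g hg
  refine Subgroup.closure_induction ?_ ?_ ?_ ?_ hg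
  · rintro s (rfl | rfl)
    · refine ⟨![1, -1, -1], by intro i; fin_cases i <;> norm_num, by norm_num [Matrix.cons_val_two], ?_⟩
      intro v i; rw [lin_affx]; fin_cases i <;> simp
    · refine ⟨![-1, 1, -1], by intro i; fin_cases i <;> norm_num, by norm_num [Matrix.cons_val_two], ?_⟩
      intro v i; rw [lin_affy]; fin_cases i <;> simp
  · exact ⟨fun _ => 1, fun i => Or.inl rfl, by norm_num, fun v i => (one_mul _).symm⟩
  · rintro a b _ _ ⟨d, hd, hdp, hdv⟩ ⟨d', hd', hdp', hdv'⟩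
    refine ⟨fun i => d i * d' i, ?_, ?_, ?_⟩
    · intro i; dsimp only
      rcases hd i with h | h <;> rcases hd' i with h' | h' <;> rw [h, h'] <;> norm_num
    · dsimp only
      rw [show d 0 * d' 0 * (d 1 * d' 1) * (d 2 * d' 2)
          = (d 0 * d 1 * d 2) * (d' 0 * d' 1 * d' 2) by ring, hdp, hdp', one_mul]
    · intro v i; dsimp only
      have : (a * b).linear v = a.linear (b.linear v) := by
        rw [show (a * b).linear = (AffineEquiv.linearHom (a * b) : V3 ≃ₗ[ℝ] V3) from rfl, map_mul]
        rfl
      rw [this, hdv, hdv']; ring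
  · rintro a _ ⟨d, hd, hdp, hdv⟩
    refine ⟨d, hd, hdp, ?_⟩
    intro v i
    have hdd : d i * d i = 1 := by rcases hd i with h | h <;> rw [h] <;> norm_num
    have h1 : a.linear (a⁻¹.linear v) = v := by
      rw [show a.linear = (AffineEquiv.linearHom a : V3 ≃ₗ[ℝ] V3) from rfl,
        show a⁻¹.linear = (AffineEquiv.linearHom a⁻¹ : V3 ≃ₗ[ℝ] V3) from rfl, map_inv]
      show ((AffineEquiv.linearHom a) * (AffineEquiv.linearHom a)⁻¹) v = v
      rw [mul_inv_cancel]; rfl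
    have h2 := congrFun h1 i
    rw [hdv] at h2
    calc a⁻¹.linear v i = (d i * d i) * a⁻¹.linear v i := by rw [hdd, one_mul]
      _ = d i * (d i * a⁻¹.linear v i) := by ring
      _ = d i * v i := by rw [h2]

/-- The homomorphism `ℤ³ → Aff(3)` by translations. -/
noncomputable def Phi : Multiplicative (ℤ × ℤ × ℤ) →* Aff3 :=
  MonoidHom.mk' (fun m => tr ![(m.toAdd.1 : ℝ), (m.toAdd.2.1 : ℝ), (m.toAdd.2.2 : ℝ)])
    (by
      intro a b
      rw [tr_mul]
      try dsimp only
      congr 1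
      funext i
      fin_cases i <;> simp <;> push_cast <;> ring)

lemma Phi_apply (m : ℤ × ℤ × ℤ) :
    Phi (Multiplicative.ofAdd m) = tr ![(m.1 : ℝ), (m.2.1 : ℝ), (m.2.2 : ℝ)] := rfl

lemma Phi_inj : Function.Injective Phi := by
  intro a b h
  have h0 := congrArg (fun f : Aff3 => f 0) h
  simp only [Phi, MonoidHom.mk'_apply, tr_apply, add_zero] at h0
  have h1 := congrFun h0 0
  have h2 := congrFun h0 1
  have h3 := congrFun h0 2
  norm_num [Matrix.cons_val_two] at h1 h2 h3
  have : a.toAdd = b.toAdd := by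
    refine Prod.ext ?_ (Prod.ext ?_ ?_) <;> exact_mod_cast ‹_›
  exact Multiplicative.toAdd.injective this

lemma Phi_range : Phi.range = TT := by
  rw [TT_eq_N]
  apply le_antisymm
  · rintro _ ⟨m, rfl⟩
    exact trMem _ _ _
  · refine (Subgroup.closure_le _).mpr ?_
    rintro s (rfl | rfl | rfl)
    · refine ⟨Multiplicative.ofAdd (1, 0, 0), ?_⟩
      rw [Phi_apply, hx2]; congr 1; funext i; fin_cases i <;> norm_num
    · refine ⟨Multiplicative.ofAdd (0, 1, 0), ?_⟩
      rw [Phi_apply, hy2]; congr 1; funext i; fin_cases i <;> norm_num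
    · refine ⟨Multiplicative.ofAdd (0, 0, 1), ?_⟩
      rw [Phi_apply, hz2]; congr 1; funext i; fin_cases i <;> norm_num

noncomputable def phi : Multiplicative (ℤ × ℤ × ℤ) ≃* TT :=
  (MonoidHom.ofInjective Phi_inj).trans (MulEquiv.subgroupCongr Phi_range)

lemma phi_coe (m : ℤ × ℤ × ℤ) :
    ((phi (Multiplicative.ofAdd m) : TT) : Aff3) = Phi (Multiplicative.ofAdd m) := rfl

noncomputable def e2 (r : ℝ) : ZMod 2 := if r = 1 then 0 else 1

lemma e2_one : e2 1 = 0 := if_pos rfl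
lemma e2_neg : e2 (-1) = 1 := if_neg (by norm_num)

lemma e2_mul {r s : ℝ} (hr : r = 1 ∨ r = -1) (hs : s = 1 ∨ s = -1) :
    e2 (r * s) = e2 r + e2 s := by
  rcases hr with rfl | rfl <;> rcases hs with rfl | rfl <;>
    norm_num [e2_one, e2_neg, e2] <;> decide

lemma lin_mul_apply (a b : Aff3) (v : V3) : (a * b).linear v = a.linear (b.linear v) := by
  rw [show (a * b).linear = (AffineEquiv.linearHom (a * b) : V3 ≃ₗ[ℝ] V3) from rfl, map_mul]
  rfl

noncomputable def psi : G6 →* Multiplicative (ZMod 2 × ZMod 2) :=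
  MonoidHom.mk' (fun g => Multiplicative.ofAdd
      (e2 ((g : Aff3).linear ![1,0,0] 0), e2 ((g : Aff3).linear ![0,1,0] 1)))
    (by
      intro a b
      obtain ⟨d, hd, _, hdv⟩ := lin_mem (a : Aff3) a.2
      obtain ⟨d', hd', _, hdv'⟩ := lin_mem (b : Aff3) b.2
      try dsimp only
      rw [show ((a * b : G6) : Aff3) = (a : Aff3) * (b : Aff3) from rfl, lin_mul_apply,
        lin_mul_apply]
      simp only [hdv, hdv', Matrix.cons_val_zero, Matrix.cons_val_one, Matrix.head_cons, mul_one]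
      rw [e2_mul (hd 0) (hd' 0), e2_mul (hd 1) (hd' 1)]
      rfl)

lemma psi_xg : psi xg = Multiplicative.ofAdd ((0 : ZMod 2), (1 : ZMod 2)) := by
  show Multiplicative.ofAdd
      (e2 (affx.linear ![1,0,0] 0), e2 (affx.linear ![0,1,0] 1)) = _
  rw [lin_affx, lin_affx]
  norm_num [e2_one, e2_neg]

lemma psi_yg : psi yg = Multiplicative.ofAdd ((1 : ZMod 2), (0 : ZMod 2)) := by
  show Multiplicative.ofAdd
      (e2 (affy.linear ![1,0,0] 0), e2 (affy.linear ![0,1,0] 1)) = _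
  rw [lin_affy, lin_affy]
  norm_num [e2_one, e2_neg]

lemma psi_surj : Function.Surjective psi := by
  intro m
  have h4 : ∀ u : ZMod 2, u = 0 ∨ u = 1 := by decide
  rcases h4 m.toAdd.1 with h1 | h1 <;> rcases h4 m.toAdd.2 with h2 | h2
  · refine ⟨1, ?_⟩
    rw [map_one, ← ofAdd_toAdd m, show m.toAdd = ((0 : ZMod 2), (0 : ZMod 2)) from
      Prod.ext h1 h2]
    rfl
  · refine ⟨xg, ?_⟩
    rw [psi_xg, ← ofAdd_toAdd m, show m.toAdd = ((0 : ZMod 2), (1 : ZMod 2)) from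
      Prod.ext h1 h2]
  · refine ⟨yg, ?_⟩
    rw [psi_yg, ← ofAdd_toAdd m, show m.toAdd = ((1 : ZMod 2), (0 : ZMod 2)) from
      Prod.ext h1 h2]
  · refine ⟨xg * yg, ?_⟩
    rw [map_mul, psi_xg, psi_yg, ← ofAdd_toAdd m,
      show m.toAdd = ((1 : ZMod 2), (1 : ZMod 2)) from Prod.ext h1 h2]
    decide

lemma psi_ker : psi.ker = TT.subgroupOf G6 := by
  ext g
  rw [MonoidHom.mem_ker, Subgroup.mem_subgroupOf]
  constructor
  · intro h
    obtain ⟨d, hd, hdp, hdv⟩ := lin_mem (g : Aff3) g.2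
    have h' := congrArg Multiplicative.toAdd h
    have hv1 : (g : Aff3).linear ![1,0,0] 0 = d 0 := by rw [hdv]; norm_num
    have hv2 : (g : Aff3).linear ![0,1,0] 1 = d 1 := by rw [hdv]; norm_num
    rw [show Multiplicative.toAdd (psi g)
        = (e2 ((g : Aff3).linear ![1,0,0] 0), e2 ((g : Aff3).linear ![0,1,0] 1)) from rfl,
      hv1, hv2] at h'
    have h1 : e2 (d 0) = 0 := congrArg Prod.fst h'
    have h2 : e2 (d 1) = 0 := congrArg Prod.snd h' 
    have hd0 : d 0 = 1 := by
      rcases hd 0 with h | h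
      · exact h
      · rw [h, e2_neg] at h1; exact absurd h1 (by decide)
    have hd1 : d 1 = 1 := by
      rcases hd 1 with h | h
      · exact h
      · rw [h, e2_neg] at h2; exact absurd h2 (by decide)
    have hd2 : d 2 = 1 := by rw [hd0, hd1] at hdp; linarith
    have hdall : ∀ i, d i = 1 := by intro i; fin_cases i <;> assumption
    refine Subgroup.mem_inf.mpr ⟨g.2, MonoidHom.mem_ker.mpr ?_⟩
    refine LinearEquiv.ext fun v => ?_
    show (g : Aff3).linear v = v
    funext i
    rw [hdv, hdall, one_mul]
  · intro h
    have hk : AffineEquiv.linearHom (g : Aff3) = 1 := (Subgroup.mem_inf.mp h).2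
    have hv : ∀ v : V3, (g : Aff3).linear v = v := fun v => by
      rw [show (g : Aff3).linear = (AffineEquiv.linearHom (g : Aff3) : V3 ≃ₗ[ℝ] V3) from rfl, hk]
      rfl
    show Multiplicative.ofAdd
        (e2 ((g : Aff3).linear ![1,0,0] 0), e2 ((g : Aff3).linear ![0,1,0] 1)) = 1
    rw [hv, hv]
    norm_num [e2_one]

/-- The translation subgroup `T = G₆ ∩ (ℝ³ × {I})` equals the subgroup
generated by `x²`, `y²` and `z²`; it is free abelian of rank 3 with basis
`{x², y², z²}` (i.e. there is an isomorphism from `ℤ³` onto `T` sending the standard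
basis to `x², y², z²`), and the quotient `G₆/T` is isomorphic to `(ℤ/2ℤ)²` (i.e. there
is a surjective homomorphism from `G₆` onto `(ℤ/2ℤ)²` with kernel `T`). -/
theorem statement3 :
    TT = Subgroup.closure {affx ^ 2, affy ^ 2, affz ^ 2} ∧
    (∃ φ : Multiplicative (ℤ × ℤ × ℤ) ≃* TT,
      ((φ (Multiplicative.ofAdd (1, 0, 0)) : Aff3) = affx ^ 2 ∧
       (φ (Multiplicative.ofAdd (0, 1, 0)) : Aff3) = affy ^ 2 ∧
       (φ (Multiplicative.ofAdd (0, 0, 1)) : Aff3) = affz ^ 2)) ∧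
    (∃ ψ : G6 →* Multiplicative (ZMod 2 × ZMod 2),
      Function.Surjective ψ ∧ ψ.ker = TT.subgroupOf G6) := by
  refine ⟨TT_eq_N, ⟨phi, ?_, ?_, ?_⟩, ⟨psi, psi_surj, psi_ker⟩⟩
  · rw [phi_coe, Phi_apply, hx2]
    congr 1; funext i; fin_cases i <;> norm_num
  · rw [phi_coe, Phi_apply, hy2]
    congr 1; funext i; fin_cases i <;> norm_num
  · rw [phi_coe, Phi_apply, hz2]
    congr 1; funext i; fin_cases i <;> norm_num
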